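/- On ℝ³ let ⟨x,y⟩₁,₂ := −x₁y₁ + x₂y₂ + x₃y₃, and let ×' be the Minkowski cross product, i.e. the antisymmetric bilinear map with e₁ ×' e₂ = e₃, e₂ ×' e₃ = −e₁, e₃ ×' e₁ = e₂. Let A be a 3×3 real matrix with ⟨Ax,Ay⟩₁,₂ = ⟨x,y⟩₁,₂ for all x,y and det A = 1, and suppose A ≠ I. If u ∈ ℝ³ satisfies A·u = u and ⟨u,u⟩₁,₂ = −1 (u is a timelike unit vector fixed by A), then for every b ∈ ℝ³ there exists v ∈ ℝ³ with ⟨v,u⟩₁,₂ = 0 and A·v + b ×' u = v. In particular, the element (b,A) of ℝ³ ⋊ SO(1,2) then has a fixed point (v,u) on the model {(v,u) : ⟨u,u⟩₁,₂ = −1, ⟨u,v⟩₁,₂ = 0} of Z(−1,c). -/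

import Mathlib

/-- The Minkowski inner product `⟨x,y⟩₁,₂ = −x₁y₁ + x₂y₂ + x₃y₃` on `ℝ³`. -/
def mdot (x y : Fin 3 → ℝ) : ℝ := -(x 0 * y 0) + x 1 * y 1 + x 2 * y 2

/-- The Minkowski cross product on `ℝ³`: `x ×' y = η (x × y)` with `η = diag(−1,1,1)`,
so that `e₁ ×' e₂ = e₃`, `e₂ ×' e₃ = −e₁`, `e₃ ×' e₁ = e₂`. -/
def mcross (x y : Fin 3 → ℝ) : Fin 3 → ℝ :=
  ![-(x 1 * y 2 - x 2 * y 1), x 2 * y 0 - x 0 * y 2, x 0 * y 1 - x 1 * y 0]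

lemma mdot_comm (x y : Fin 3 → ℝ) : mdot x y = mdot y x := by simp [mdot]; ring

lemma mdot_add_left (x y z : Fin 3 → ℝ) : mdot (x + y) z = mdot x z + mdot y z := by
  simp [mdot]; ring

lemma mdot_sub_left (x y z : Fin 3 → ℝ) : mdot (x - y) z = mdot x z - mdot y z := by
  simp [mdot]; ring

lemma mdot_smul_left (t : ℝ) (x y : Fin 3 → ℝ) : mdot (t • x) y = t * mdot x y := by
  simp [mdot]; ring

lemma mdot_smul_right (t : ℝ) (x y : Fin 3 → ℝ) : mdot x (t • y) = t * mdot x y := by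
  simp [mdot]; ring

lemma mcross_mdot_left (a b : Fin 3 → ℝ) : mdot (mcross a b) a = 0 := by simp [mdot, mcross]; ring

lemma mcross_mdot_right (a b : Fin 3 → ℝ) : mdot (mcross a b) b = 0 := by simp [mdot, mcross]; ring

lemma mlagrange (a b : Fin 3 → ℝ) :
    mdot (mcross a b) (mcross a b) = (mdot a b) ^ 2 - mdot a a * mdot b b := by
  simp [mdot, mcross]; ring

lemma mtriple (z y u : Fin 3 → ℝ) : mdot (mcross z y) u = mdot (mcross u z) y := by
  simp [mdot, mcross]; ring

lemma mdot_nonneg (u w : Fin 3 → ℝ) (huu : mdot u u = -1) (hw : mdot w u = 0) : 0 ≤ mdot w w := by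
  simp only [mdot] at *
  have e : w 0 * u 0 = w 1 * u 1 + w 2 * u 2 := by linarith
  have e2 : (w 0 * u 0) ^ 2 = (w 1 * u 1 + w 2 * u 2) ^ 2 := by rw [e]
  nlinarith [e2, sq_nonneg (w 1 * u 2 - w 2 * u 1), sq_nonneg (u 1), sq_nonneg (u 2),
    sq_nonneg (w 1), sq_nonneg (w 2), sq_nonneg (w 0)]

lemma mdot_zero_eq (u w : Fin 3 → ℝ) (huu : mdot u u = -1) (hw : mdot w u = 0)
    (hww : mdot w w = 0) : w = 0 := by
  simp only [mdot] at *
  have e : w 0 * u 0 = w 1 * u 1 + w 2 * u 2 := by linarith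
  have e2 : (w 0 * u 0) ^ 2 = (w 1 * u 1 + w 2 * u 2) ^ 2 := by rw [e]
  have h0 : w 0 ^ 2 ≤ 0 := by
    nlinarith [e2, sq_nonneg (w 1 * u 2 - w 2 * u 1), sq_nonneg (u 1), sq_nonneg (u 2)]
  have h0' : w 0 = 0 := by nlinarith [sq_nonneg (w 0)]
  have h1 : w 1 = 0 := by nlinarith [sq_nonneg (w 1), sq_nonneg (w 2)]
  have h2 : w 2 = 0 := by nlinarith [sq_nonneg (w 1), sq_nonneg (w 2)]
  funext i; fin_cases i <;> simp [h0', h1, h2]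

lemma ortho3 (u z y : Fin 3 → ℝ) (huu : mdot u u = -1) (hzu : mdot z u = 0)
    (hzz : 0 < mdot z z) (hyu : mdot y u = 0) (hyz : mdot y z = 0)
    (hyz' : mdot y (mcross u z) = 0) : y = 0 := by
  have hpu : mdot (mcross z y) u = 0 := by
    rw [mtriple, ← mdot_comm]; exact hyz'
  have h1 : 0 ≤ mdot (mcross z y) (mcross z y) := mdot_nonneg u _ huu hpu
  have h2 : mdot (mcross z y) (mcross z y) = (mdot z y) ^ 2 - mdot z z * mdot y y :=
    mlagrange z y
  have hzy : mdot z y = 0 := by rw [mdot_comm]; exact hyz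
  have hyy : mdot y y ≤ 0 := by
    rw [h2, hzy] at h1; nlinarith
  have hyy0 : mdot y y = 0 := le_antisymm hyy (mdot_nonneg u y huu hyu)
  exact mdot_zero_eq u y huu hyu hyy0

lemma fix_all (A : Matrix (Fin 3) (Fin 3) ℝ)
    (hA : ∀ x y : Fin 3 → ℝ, mdot (A.mulVec x) (A.mulVec y) = mdot x y)
    (hdet : A.det = 1)
    (u : Fin 3 → ℝ) (hu : A.mulVec u = u) (huu : mdot u u = -1)
    (z : Fin 3 → ℝ) (hz : A.mulVec z = z) (hzu : mdot z u = 0) (hzz : 0 < mdot z z) :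
    A = 1 := by
  have hAl : ∀ x y : Fin 3 → ℝ, A.mulVec y = y → mdot (A.mulVec x) y = mdot x y := by
    intro x y h
    have h2 := hA x y; rwa [h] at h2
  have g1 : mdot (mcross u z) u = 0 := mcross_mdot_left u z
  have g2 : mdot (mcross u z) z = 0 := mcross_mdot_right u z
  have huz : mdot u z = 0 := by rw [mdot_comm]; exact hzu
  have g3 : mdot (mcross u z) (mcross u z) = mdot z z := by
    rw [mlagrange, huz, huu]; ring
  set lam := mdot (A.mulVec (mcross u z)) (mcross u z) / mdot z z with hlam
  have hy : A.mulVec (mcross u z) - lam • (mcross u z) = 0 := by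
    apply ortho3 u z _ huu hzu hzz
    · rw [mdot_sub_left, mdot_smul_left, hAl _ u hu, g1]; ring
    · rw [mdot_sub_left, mdot_smul_left, hAl _ z hz, g2]; ring
    · rw [mdot_sub_left, mdot_smul_left, hlam, g3]
      field_simp
      ring
  have hAz' : A.mulVec (mcross u z) = lam • mcross u z := by rwa [sub_eq_zero] at hy
  have hlam2 : lam * lam = 1 := by
    have h := hA (mcross u z) (mcross u z)
    rw [hAz', mdot_smul_left, mdot_smul_right, g3] at h
    have h2 : (lam * lam - 1) * mdot z z = 0 := by linear_combination h
    rcases mul_eq_zero.mp h2 with h3 | h3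
    · linarith
    · exact absurd h3 (ne_of_gt hzz)
  have hlam1 : lam = 1 := by
    by_contra hne1
    have hlamn : lam = -1 := by
      have h4 : (lam - 1) * (lam + 1) = 0 := by linear_combination hlam2
      rcases mul_eq_zero.mp h4 with h5 | h5
      · exact absurd (by linarith) hne1
      · linarith
    have hAz'' : A.mulVec (mcross u z) = -(mcross u z) := by
      rw [hAz', hlamn, neg_one_smul]
    have hQdet : (Matrix.of ![u, z, mcross u z]).det = mdot (mcross u z) (mcross u z) := by
      simp [Matrix.det_fin_three, mdot, mcross]; ring
    have hQA : Matrix.of ![u, z, mcross u z] * A.transpose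
        = Matrix.of ![u, z, -(mcross u z)] := by
      ext i j
      fin_cases i <;>
        simp [Matrix.mul_apply, Fin.sum_univ_three, Matrix.transpose_apply]
      · have h := congrFun hu j
        simp only [Matrix.mulVec, dotProduct, Fin.sum_univ_three] at h
        linear_combination h
      · have h := congrFun hz j
        simp only [Matrix.mulVec, dotProduct, Fin.sum_univ_three] at h
        linear_combination h
      · have h := congrFun hAz'' j
        simp only [Matrix.mulVec, dotProduct, Fin.sum_univ_three, Pi.neg_apply] at h ⊢
        linear_combination h
    have hd1 : (Matrix.of ![u, z, mcross u z]).det * A.det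
        = (Matrix.of ![u, z, -(mcross u z)]).det := by
      rw [← Matrix.det_transpose A, ← Matrix.det_mul, hQA]
    have hd2 : (Matrix.of ![u, z, -(mcross u z)]).det
        = -(Matrix.of ![u, z, mcross u z]).det := by
      simp [Matrix.det_fin_three]; ring
    rw [hdet, mul_one, hd2, hQdet, g3] at hd1
    linarith
  rw [hlam1, one_smul] at hAz'
  have hall : ∀ x, A.mulVec x = x := by
    intro x
    have hz'u : mdot u (mcross u z) = 0 := by rw [mdot_comm]; exact g1
    have hz'z : mdot z (mcross u z) = 0 := by rw [mdot_comm]; exact g2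
    have hy0 : x + (mdot x u) • u - (mdot x z / mdot z z) • z
        - (mdot x (mcross u z) / mdot z z) • (mcross u z) = 0 := by
      apply ortho3 u z _ huu hzu hzz
      · rw [mdot_sub_left, mdot_sub_left, mdot_add_left, mdot_smul_left, mdot_smul_left,
          mdot_smul_left, huu, hzu, g1]; ring
      · rw [mdot_sub_left, mdot_sub_left, mdot_add_left, mdot_smul_left, mdot_smul_left,
          mdot_smul_left, huz, g2]
        field_simp
        ring
      · rw [mdot_sub_left, mdot_sub_left, mdot_add_left, mdot_smul_left, mdot_smul_left,
          mdot_smul_left, hz'u, hz'z, g3]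
        field_simp
        ring
    have hx : x = (-(mdot x u)) • u + (mdot x z / mdot z z) • z
        + (mdot x (mcross u z) / mdot z z) • (mcross u z) := by
      funext i
      have h := congrFun hy0 i
      simp only [Pi.add_apply, Pi.sub_apply, Pi.smul_apply, smul_eq_mul, Pi.zero_apply,
        neg_mul] at h ⊢
      linarith
    conv_lhs => rw [hx]
    rw [Matrix.mulVec_add, Matrix.mulVec_add, Matrix.mulVec_smul, Matrix.mulVec_smul,
      Matrix.mulVec_smul, hu, hz, hAz']
    exact hx.symm
  ext i j
  have h := congrFun (hall (Pi.single j 1)) i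
  simp only [Matrix.mulVec_single, mul_one, MulOpposite.op_one, one_smul, Matrix.col_apply] at h
  rw [Matrix.one_apply, h, Pi.single_apply]

/-- If `A ∈ SO(1,2)`, `A ≠ I`, fixes a timelike unit vector `u`
(`Au = u`, `⟨u,u⟩₁,₂ = −1`), then for every `b ∈ ℝ³` there exists `v ⊥ u` with
`Av + b ×' u = v`; i.e. `(b,A) ∈ ℝ³ ⋊ SO(1,2)` has a fixed point `(v,u)` on the model
of `Z(−1,c)`. -/
theorem stmt9 (A : Matrix (Fin 3) (Fin 3) ℝ)
    (hA : ∀ x y : Fin 3 → ℝ, mdot (A.mulVec x) (A.mulVec y) = mdot x y)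
    (hdet : A.det = 1) (hAne : A ≠ 1)
    (u : Fin 3 → ℝ) (hu : A.mulVec u = u) (huu : mdot u u = -1) :
    ∀ b : Fin 3 → ℝ, ∃ v : Fin 3 → ℝ, mdot v u = 0 ∧ A.mulVec v + mcross b u = v := by
  intro b
  have hune : u ≠ 0 := by
    intro h
    rw [h] at huu
    simp [mdot] at huu
  have hAl : ∀ x y : Fin 3 → ℝ, A.mulVec y = y → mdot (A.mulVec x) y = mdot x y := by
    intro x y h
    have h2 := hA x y; rwa [h] at h2
  -- every fixed vector of A is a multiple of u
  have key : ∀ w : Fin 3 → ℝ, A.mulVec w = w → ∃ t : ℝ, w = t • u := by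
    intro w hw
    set z := w + (mdot w u) • u with hzdef
    have hzu : mdot z u = 0 := by
      rw [hzdef, mdot_add_left, mdot_smul_left, huu]; ring
    have hz : A.mulVec z = z := by
      rw [hzdef, Matrix.mulVec_add, Matrix.mulVec_smul, hu, hw]
    by_cases hz0 : z = 0
    · refine ⟨-(mdot w u), ?_⟩
      rw [hzdef] at hz0
      rw [neg_smul]
      exact eq_neg_of_add_eq_zero_left hz0
    · exfalso
      have hzznn : 0 ≤ mdot z z := mdot_nonneg u z huu hzu
      have hzzne : mdot z z ≠ 0 := fun h => hz0 (mdot_zero_eq u z huu hzu h)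
      exact hAne (fix_all A hA hdet u hu huu z hz hzu (lt_of_le_of_ne hzznn (Ne.symm hzzne)))
  -- linear algebra: the image of (1 - A) is exactly u-perp
  set f : (Fin 3 → ℝ) →ₗ[ℝ] (Fin 3 → ℝ) := Matrix.mulVecLin (1 - A) with hfdef
  have hfapply : ∀ x, f x = x - A.mulVec x := by
    intro x
    rw [hfdef]
    simp [Matrix.mulVecLin_apply, Matrix.sub_mulVec, Matrix.one_mulVec]
  have hker : LinearMap.ker f = Submodule.span ℝ {u} := by
    apply le_antisymm
    · intro w hw
      rw [LinearMap.mem_ker, hfapply] at hw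
      have hw' : A.mulVec w = w := by
        have := sub_eq_zero.mp hw; exact this.symm
      obtain ⟨t, rfl⟩ := key w hw'
      exact Submodule.smul_mem _ t (Submodule.mem_span_singleton_self u)
    · rw [Submodule.span_le, Set.singleton_subset_iff]
      rw [SetLike.mem_coe, LinearMap.mem_ker, hfapply, hu, sub_self]
  have hfr3 : Module.finrank ℝ (Fin 3 → ℝ) = 3 := by simp
  have hkfr : Module.finrank ℝ (LinearMap.ker f) = 1 := by
    rw [hker]; exact finrank_span_singleton hune
  have hrfr : Module.finrank ℝ (LinearMap.range f) = 2 := by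
    have h := LinearMap.finrank_range_add_finrank_ker f
    rw [hkfr, hfr3] at h
    omega
  -- the functional x ↦ mdot x u
  set φ : (Fin 3 → ℝ) →ₗ[ℝ] ℝ :=
    { toFun := fun x => mdot x u
      map_add' := fun a c => mdot_add_left a c u
      map_smul' := fun t a => by simpa using mdot_smul_left t a u } with hφdef
  have hφapply : ∀ x, φ x = mdot x u := fun x => rfl
  have hφsurj : Function.Surjective φ := by
    intro c
    refine ⟨(-c) • u, ?_⟩
    rw [hφapply, mdot_smul_left, huu]; ring
  have hWfr : Module.finrank ℝ (LinearMap.ker φ) = 2 := by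
    have h := LinearMap.finrank_range_add_finrank_ker φ
    rw [LinearMap.range_eq_top.mpr hφsurj, hfr3] at h
    simp only [finrank_top, Module.finrank_self] at h
    omega
  have hle : LinearMap.range f ≤ LinearMap.ker φ := by
    rintro x ⟨w, rfl⟩
    rw [LinearMap.mem_ker, hφapply, hfapply, mdot_sub_left, hAl w u hu, sub_self]
  have heq : LinearMap.range f = LinearMap.ker φ :=
    Submodule.eq_of_le_of_finrank_eq hle (by rw [hrfr, hWfr])
  have hmem : mcross b u ∈ LinearMap.ker φ := by
    rw [LinearMap.mem_ker, hφapply]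
    exact mcross_mdot_right b u
  rw [← heq] at hmem
  obtain ⟨v₀, hv₀⟩ := hmem
  rw [hfapply] at hv₀
  refine ⟨v₀ + (mdot v₀ u) • u, ?_, ?_⟩
  · rw [mdot_add_left, mdot_smul_left, huu]; ring
  · rw [Matrix.mulVec_add, Matrix.mulVec_smul, hu, ← hv₀]; abel
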